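/- arXiv:1703.01911 — 2 statements merged into one kernel-verified Lean document; each statement's English description precedes it below -/
import Mathlib

section
/- Let α ∈ [2,3) and a_α := −cos(απ/2) > 0. For every k ∈ ℕ there exists a constant C_k > 0 such that for all ξ ≥ 1, the k-th derivative of the function ξ ↦ ξ/√(1 + a_α ξ^α) satisfies |d^k/dξ^k [ξ/√(1 + a_α ξ^α)]| ≤ C_k · ξ^{1 − α/2 − k}. -/
open Real

private lemma natDegree_X_mul_deriv_le (p : Polynomial ℝ) :
    (Polynomial.X * Polynomial.derivative p).natDegree ≤ p.natDegree := by
  rcases eq_or_ne (Polynomial.derivative p) 0 with h | h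
  · simp [h]
  · have h1 : (Polynomial.derivative p).natDegree ≤ p.natDegree - 1 :=
      Polynomial.natDegree_derivative_le p
    have h0 : p.natDegree ≠ 0 := by
      intro hz
      apply h
      rw [Polynomial.eq_C_of_natDegree_eq_zero hz]
      simp
    rw [Polynomial.natDegree_mul Polynomial.X_ne_zero h, Polynomial.natDegree_X]
    omega

private lemma key_formula (a α : ℝ) (ha : 0 < a) (k : ℕ) :
    ∃ p : Polynomial ℝ, p.natDegree ≤ k ∧ ∀ x : ℝ, 0 < x →
      iteratedDeriv k (fun x : ℝ => x / Real.sqrt (1 + a * x ^ α)) x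
        = x ^ ((1 : ℝ) - k) * p.eval (a * x ^ α)
            * (1 + a * x ^ α) ^ (-(1 / 2 : ℝ) - k) := by
  induction k with
  | zero =>
    refine ⟨1, by simp, fun x hx => ?_⟩
    have hpos : (0 : ℝ) < 1 + a * x ^ α := by positivity
    rw [iteratedDeriv_zero]
    rw [Real.sqrt_eq_rpow]
    push_cast
    rw [show -(1 / 2 : ℝ) - 0 = -(1 / 2) by ring, Real.rpow_neg hpos.le]
    simp [div_eq_mul_inv]
  | succ k ih =>
    obtain ⟨p, hdeg, hp⟩ := ih
    refine ⟨Polynomial.C (1 - (k : ℝ)) * p * (1 + Polynomial.X)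
        + Polynomial.C α * (Polynomial.X * Polynomial.derivative p * (1 + Polynomial.X))
        - Polynomial.C (((k : ℝ) + 1 / 2) * α) * (Polynomial.X * p), ?_, ?_⟩
    · apply le_trans (Polynomial.natDegree_sub_le _ _)
      have h1X : (1 + Polynomial.X : Polynomial ℝ).natDegree ≤ 1 := by
        apply le_trans (Polynomial.natDegree_add_le _ _); simp
      have t1 : (Polynomial.C (1 - (k : ℝ)) * p * (1 + Polynomial.X)).natDegree ≤ k + 1 := by
        apply le_trans (Polynomial.natDegree_mul_le)
        have := Polynomial.natDegree_mul_le (p := Polynomial.C (1 - (k : ℝ))) (q := p)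
        simp only [Polynomial.natDegree_C] at this
        omega
      have t2 : (Polynomial.C α * (Polynomial.X * Polynomial.derivative p
          * (1 + Polynomial.X))).natDegree ≤ k + 1 := by
        apply le_trans (Polynomial.natDegree_mul_le)
        have h2 := Polynomial.natDegree_mul_le
          (p := Polynomial.X * Polynomial.derivative p) (q := 1 + Polynomial.X)
        have := natDegree_X_mul_deriv_le p
        simp only [Polynomial.natDegree_C]
        omega
      have t3 : (Polynomial.C (((k : ℝ) + 1 / 2) * α) * (Polynomial.X * p)).natDegree
          ≤ k + 1 := by
        apply le_trans (Polynomial.natDegree_mul_le)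
        have := Polynomial.natDegree_mul_le (p := (Polynomial.X : Polynomial ℝ)) (q := p)
        simp only [Polynomial.natDegree_C, Polynomial.natDegree_X] at *
        omega
      have tadd := Polynomial.natDegree_add_le
        (Polynomial.C (1 - (k : ℝ)) * p * (1 + Polynomial.X))
        (Polynomial.C α * (Polynomial.X * Polynomial.derivative p * (1 + Polynomial.X)))
      omega
    · intro x hx
      set u : ℝ := a * x ^ α with hu_def
      have hupos : 0 < u := by positivity
      have h1u : (0 : ℝ) < 1 + u := by positivity
      have hsmem : Set.Ioi (0 : ℝ) ∈ nhds x := isOpen_Ioi.mem_nhds hx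
      have heq : iteratedDeriv k (fun x : ℝ => x / Real.sqrt (1 + a * x ^ α)) =ᶠ[nhds x]
          (fun x => x ^ ((1 : ℝ) - k) * p.eval (a * x ^ α)
            * (1 + a * x ^ α) ^ (-(1 / 2 : ℝ) - k)) :=
        Filter.eventuallyEq_of_mem hsmem (fun y hy => hp y hy)
      rw [iteratedDeriv_succ, heq.deriv_eq]
      -- derivatives of the pieces
      have hxne : x ≠ 0 := hx.ne'
      have hU : HasDerivAt (fun x : ℝ => a * x ^ α) (a * (α * x ^ (α - 1))) x :=
        (Real.hasDerivAt_rpow_const (Or.inl hxne)).const_mul a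
      have h1 : HasDerivAt (fun x : ℝ => x ^ ((1 : ℝ) - k))
          (((1 : ℝ) - k) * x ^ (((1 : ℝ) - k) - 1)) x :=
        Real.hasDerivAt_rpow_const (Or.inl hxne)
      have h2 : HasDerivAt (fun x : ℝ => p.eval (a * x ^ α))
          ((Polynomial.derivative p).eval u * (a * (α * x ^ (α - 1)))) x :=
        by have h := (p.hasDerivAt u).comp x hU; exact h
      have h3 : HasDerivAt (fun x : ℝ => (1 + a * x ^ α) ^ (-(1 / 2 : ℝ) - k))
          ((-(1 / 2 : ℝ) - k) * (1 + u) ^ ((-(1 / 2 : ℝ) - k) - 1)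
            * (a * (α * x ^ (α - 1)))) x := by
        have hin : HasDerivAt (fun x : ℝ => 1 + a * x ^ α) (a * (α * x ^ (α - 1))) x :=
          hU.const_add 1
        exact (Real.hasDerivAt_rpow_const (p := -(1 / 2 : ℝ) - k)
          (Or.inl h1u.ne')).comp x hin
      have hD := (h1.fun_mul h2).fun_mul h3
      rw [hD.deriv]
      -- now the algebraic identity
      have E1 : x ^ (((1 : ℝ) - k) - 1) = x ^ (-(k : ℝ)) := by ring_nf
      have E2 : x ^ ((1 : ℝ) - k) = x * x ^ (-(k : ℝ)) := by
        rw [show (1 : ℝ) - k = 1 + (-(k : ℝ)) by ring, Real.rpow_add hx, Real.rpow_one]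
      have E3 : x ^ (α - 1) = x ^ α * x⁻¹ := by
        rw [Real.rpow_sub hx, Real.rpow_one, div_eq_mul_inv]
      have E4 : (1 + u) ^ (-(1 / 2 : ℝ) - k)
          = (1 + u) ^ ((-(1 / 2 : ℝ) - k) - 1) * (1 + u) := by
        have h := Real.rpow_add h1u (-(1 / 2 : ℝ) - k - 1) 1
        rw [Real.rpow_one] at h
        conv_lhs => rw [show -(1 / 2 : ℝ) - (k : ℝ) = (-(1 / 2 : ℝ) - k - 1) + 1 by ring, h]
      have E5 : (-(1 / 2 : ℝ) - ((k : ℕ) + 1 : ℕ)) = (-(1 / 2 : ℝ) - k) - 1 := by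
        push_cast; ring
      have E6 : x ^ ((1 : ℝ) - ((k : ℕ) + 1 : ℕ)) = x ^ (-(k : ℝ)) := by
        push_cast; ring_nf
      rw [E5, E6]
      simp only [Polynomial.eval_sub, Polynomial.eval_add, Polynomial.eval_mul,
        Polynomial.eval_one, Polynomial.eval_C, Polynomial.eval_X]
      rw [E1, E2, E3, E4]
      have hxinv : x * x⁻¹ = 1 := mul_inv_cancel₀ hxne
      field_simp
      ring

/-- The constant `a_α := -cos(απ/2)` appearing in the fractional Eringen wave equation. -/
noncomputable def aCoef (α : ℝ) : ℝ := -Real.cos (α * Real.pi / 2)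

/-- For `α ∈ [2,3)` (where `a_α = -cos(απ/2) > 0`) and every `k ∈ ℕ` there is
`C_k > 0` such that for all `ξ ≥ 1` the `k`-th derivative of
`ξ ↦ ξ/√(1 + a_α ξ^α)` is bounded by `C_k ξ^{1-α/2-k}`:
the symbol `h_α` is of order `1 − α/2` and type `(1,0)` for large frequencies. -/
theorem symbol_h_estimates (α : ℝ) (hα : α ∈ Set.Ico (2 : ℝ) 3) (ha : 0 < aCoef α)
    (k : ℕ) :
    ∃ C : ℝ, 0 < C ∧ ∀ ξ : ℝ, 1 ≤ ξ →
      |iteratedDeriv k (fun x : ℝ => x / Real.sqrt (1 + aCoef α * x ^ α)) ξ| ≤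
        C * ξ ^ (1 - α / 2 - (k : ℝ)) := by
  obtain ⟨p, hdeg, hp⟩ := key_formula (aCoef α) α ha k
  set a := aCoef α with ha_def
  have hsq : 0 < Real.sqrt a := Real.sqrt_pos.mpr ha
  set S := ∑ i ∈ Finset.range (k + 1), |p.coeff i| with hS
  have hS0 : 0 ≤ S := Finset.sum_nonneg fun i _ => abs_nonneg _
  refine ⟨(S + 1) * (Real.sqrt a)⁻¹, by positivity, fun ξ hξ => ?_⟩
  have hx : (0 : ℝ) < ξ := lt_of_lt_of_le one_pos hξ
  have hxα : (0 : ℝ) < ξ ^ α := Real.rpow_pos_of_pos hx α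
  rw [hp ξ hx]
  set u := a * ξ ^ α with hu
  have hupos : 0 < u := mul_pos ha hxα
  have h1u : (0 : ℝ) < 1 + u := by positivity
  have habs : |ξ ^ ((1 : ℝ) - k) * p.eval u * (1 + u) ^ (-(1 / 2 : ℝ) - k)|
      = ξ ^ ((1 : ℝ) - k) * |p.eval u| * (1 + u) ^ (-(1 / 2 : ℝ) - k) := by
    rw [abs_mul, abs_mul, abs_of_nonneg (Real.rpow_nonneg hx.le _),
      abs_of_nonneg (Real.rpow_nonneg h1u.le _)]
  rw [habs]
  have hPb : |p.eval u| ≤ (S + 1) * (1 + u) ^ ((k : ℝ)) := by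
    have hev := Polynomial.eval_eq_sum_range' (Nat.lt_succ_of_le hdeg) u
    calc |p.eval u| = |∑ i ∈ Finset.range (k + 1), p.coeff i * u ^ i| := by rw [hev]
      _ ≤ ∑ i ∈ Finset.range (k + 1), |p.coeff i * u ^ i| :=
          Finset.abs_sum_le_sum_abs _ _
      _ ≤ ∑ i ∈ Finset.range (k + 1), |p.coeff i| * (1 + u) ^ ((k : ℝ)) := by
          apply Finset.sum_le_sum
          intro i hi
          rw [abs_mul, abs_pow, abs_of_nonneg hupos.le]
          have h1 : u ^ i ≤ (1 + u) ^ i := pow_le_pow_left₀ hupos.le (by linarith) i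
          have h2 : (1 + u : ℝ) ^ i ≤ (1 + u) ^ k :=
            pow_le_pow_right₀ (by linarith) (Nat.lt_succ_iff.mp (Finset.mem_range.mp hi))
          have h3 : ((1 + u : ℝ)) ^ (k : ℕ) = (1 + u) ^ ((k : ℝ)) :=
            (Real.rpow_natCast _ k).symm
          rw [← h3]
          exact mul_le_mul_of_nonneg_left (h1.trans h2) (abs_nonneg _)
      _ = S * (1 + u) ^ ((k : ℝ)) := by rw [← Finset.sum_mul]
      _ ≤ (S + 1) * (1 + u) ^ ((k : ℝ)) :=
          mul_le_mul_of_nonneg_right (by linarith) (Real.rpow_nonneg h1u.le _)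
  have hmono : (1 + u) ^ (-(1 / 2 : ℝ)) ≤ u ^ (-(1 / 2 : ℝ)) := by
    rw [Real.rpow_neg h1u.le, Real.rpow_neg hupos.le]
    exact inv_anti₀ (Real.rpow_pos_of_pos hupos _)
      (Real.rpow_le_rpow hupos.le (by linarith) (by norm_num))
  calc ξ ^ ((1 : ℝ) - k) * |p.eval u| * (1 + u) ^ (-(1 / 2 : ℝ) - k)
      ≤ ξ ^ ((1 : ℝ) - k) * ((S + 1) * (1 + u) ^ ((k : ℝ))) * (1 + u) ^ (-(1 / 2 : ℝ) - k) := by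
        exact mul_le_mul_of_nonneg_right
          (mul_le_mul_of_nonneg_left hPb (Real.rpow_nonneg hx.le _))
          (Real.rpow_nonneg h1u.le _)
    _ = (S + 1) * (ξ ^ ((1 : ℝ) - k) * ((1 + u) ^ ((k : ℝ)) * (1 + u) ^ (-(1 / 2 : ℝ) - k))) := by
        ring
    _ = (S + 1) * (ξ ^ ((1 : ℝ) - k) * (1 + u) ^ (-(1 / 2 : ℝ))) := by
        rw [← Real.rpow_add h1u]
        norm_num
    _ ≤ (S + 1) * (ξ ^ ((1 : ℝ) - k) * u ^ (-(1 / 2 : ℝ))) := by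
        exact mul_le_mul_of_nonneg_left
          (mul_le_mul_of_nonneg_left hmono (Real.rpow_nonneg hx.le _)) (by linarith)
    _ = (S + 1) * (Real.sqrt a)⁻¹ * ξ ^ (1 - α / 2 - (k : ℝ)) := by
        have e1 : (a * ξ ^ α) ^ (-(1 / 2 : ℝ))
            = (Real.sqrt a)⁻¹ * ξ ^ (α * (-(1 / 2 : ℝ))) := by
          rw [Real.mul_rpow ha.le hxα.le, ← Real.rpow_mul hx.le,
            Real.rpow_neg ha.le, Real.sqrt_eq_rpow]
        have e2 : ξ ^ ((1 : ℝ) - k) * ξ ^ (α * (-(1 / 2 : ℝ)))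
            = ξ ^ (1 - α / 2 - (k : ℝ)) := by
          rw [← Real.rpow_add hx]
          ring_nf
        rw [hu, e1, ← e2]
        ring
end

section
/- Let α ∈ [2,3) and a_α := −cos(απ/2) > 0. For every k ∈ ℕ there exists a constant C_k > 0 such that for all ξ ≥ 1, the k-th derivative of the function ξ ↦ √(1 + a_α ξ^α) satisfies |d^k/dξ^k √(1 + a_α ξ^α)| ≤ C_k · ξ^{α/2 − k}. -/
open Real

namespace SymbolGAux

/-- Value of a single symbol term `q * x^b * (1 + a x^α)^c`. -/
noncomputable def tval (a α : ℝ) (p : ℝ × ℝ × ℝ) (x : ℝ) : ℝ :=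
  p.1 * x ^ p.2.1 * (1 + a * x ^ α) ^ p.2.2

/-- Value of a sum of symbol terms. -/
noncomputable def val (a α : ℝ) (L : List (ℝ × ℝ × ℝ)) (x : ℝ) : ℝ :=
  (L.map fun p => tval a α p x).sum

/-- Formal derivative of a list of symbol terms. -/
noncomputable def dL (a α : ℝ) (L : List (ℝ × ℝ × ℝ)) : List (ℝ × ℝ × ℝ) :=
  L.flatMap fun p =>
    [(p.1 * p.2.1, p.2.1 - 1, p.2.2), (p.1 * p.2.2 * a * α, p.2.1 + α - 1, p.2.2 - 1)]

lemma one_add_pos {a α x : ℝ} (ha : 0 < a) (hx : 0 < x) : 0 < 1 + a * x ^ α := by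
  have : 0 < x ^ α := Real.rpow_pos_of_pos hx α
  nlinarith

lemma hasDerivAt_tval {a α x : ℝ} (ha : 0 < a) (hx : 0 < x) (p : ℝ × ℝ × ℝ) :
    HasDerivAt (fun y => tval a α p y)
      (tval a α (p.1 * p.2.1, p.2.1 - 1, p.2.2) x +
        tval a α (p.1 * p.2.2 * a * α, p.2.1 + α - 1, p.2.2 - 1) x) x := by
  obtain ⟨q, b, c⟩ := p
  have hpos : 0 < 1 + a * x ^ α := one_add_pos ha hx
  have h1 : HasDerivAt (fun y : ℝ => y ^ b) (b * x ^ (b - 1)) x :=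
    Real.hasDerivAt_rpow_const (Or.inl hx.ne')
  have h2 : HasDerivAt (fun y : ℝ => 1 + a * y ^ α) (a * (α * x ^ (α - 1))) x := by
    exact ((Real.hasDerivAt_rpow_const (p := α) (Or.inl hx.ne')).const_mul a).const_add 1
  have h3 : HasDerivAt (fun y : ℝ => (1 + a * y ^ α) ^ c)
      ((a * (α * x ^ (α - 1))) * c * (1 + a * x ^ α) ^ (c - 1)) x :=
    h2.rpow_const (Or.inl hpos.ne')
  have h4 := (h1.mul h3).const_mul q
  have hx' : x ^ (b + α - 1) = x ^ b * x ^ (α - 1) := by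
    rw [show b + α - 1 = b + (α - 1) by ring, Real.rpow_add hx]
  simp only [tval]
  refine (h4.congr_deriv ?_).congr_of_eventuallyEq (Filter.Eventually.of_forall fun y => ?_)
  · rw [hx']; ring
  · simp only [Pi.mul_apply]; ring

lemma val_cons (a α : ℝ) (p : ℝ × ℝ × ℝ) (L : List (ℝ × ℝ × ℝ)) (x : ℝ) :
    val a α (p :: L) x = tval a α p x + val a α L x := by
  simp [val]

lemma hasDerivAt_val {a α x : ℝ} (ha : 0 < a) (hx : 0 < x) (L : List (ℝ × ℝ × ℝ)) :
    HasDerivAt (fun y => val a α L y) (val a α (dL a α L) x) x := by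
  induction L with
  | nil => simpa [val, dL] using hasDerivAt_const x (0 : ℝ)
  | cons p L ih =>
    have h := (hasDerivAt_tval ha hx (α := α) p).add ih
    have hval : val a α (dL a α (p :: L)) x =
        (tval a α (p.1 * p.2.1, p.2.1 - 1, p.2.2) x +
          tval a α (p.1 * p.2.2 * a * α, p.2.1 + α - 1, p.2.2 - 1) x) +
          val a α (dL a α L) x := by
      simp [dL, val]; ring
    rw [hval]
    have : (fun y => val a α (p :: L) y) = fun y => tval a α p y + val a α L y := by
      funext y; exact val_cons a α p L y
    rw [this]
    exact h

lemma dL_order {a α m : ℝ} {L : List (ℝ × ℝ × ℝ)}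
    (h : ∀ p ∈ L, p.2.1 + α * p.2.2 = m) :
    ∀ p ∈ dL a α L, p.2.1 + α * p.2.2 = m - 1 := by
  intro p hp
  simp only [dL, List.mem_flatMap, List.mem_cons, List.not_mem_nil, or_false] at hp
  obtain ⟨q, hq, hpq⟩ := hp
  have hq' := h q hq
  rcases hpq with rfl | rfl
  · simp only; nlinarith [hq']
  · simp only; nlinarith [hq']

lemma rpow_bound {a α c x : ℝ} (ha : 0 < a) (hα : 0 ≤ α) (hx : 1 ≤ x) :
    (1 + a * x ^ α) ^ c ≤ (a ^ c + (1 + a) ^ c) * x ^ (α * c) := by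
  have hx0 : 0 < x := lt_of_lt_of_le one_pos hx
  have hy : 1 ≤ x ^ α := Real.one_le_rpow hx hα
  have hy0 : 0 < x ^ α := lt_of_lt_of_le one_pos hy
  have hxac : x ^ (α * c) = (x ^ α) ^ c := Real.rpow_mul hx0.le α c
  rcases le_or_gt 0 c with hc | hc
  · have h1 : 1 + a * x ^ α ≤ (1 + a) * x ^ α := by nlinarith
    have h2 : (1 + a * x ^ α) ^ c ≤ ((1 + a) * x ^ α) ^ c :=
      Real.rpow_le_rpow (by positivity) h1 hc
    have h3 : ((1 + a) * x ^ α) ^ c = (1 + a) ^ c * (x ^ α) ^ c :=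
      Real.mul_rpow (by positivity) hy0.le
    have h4 : 0 ≤ a ^ c * (x ^ α) ^ c := by positivity
    rw [hxac]
    calc (1 + a * x ^ α) ^ c ≤ (1 + a) ^ c * (x ^ α) ^ c := by rw [← h3]; exact h2
      _ ≤ (a ^ c + (1 + a) ^ c) * (x ^ α) ^ c := by nlinarith
  · have h1 : a * x ^ α ≤ 1 + a * x ^ α := by linarith
    have h2 : (1 + a * x ^ α) ^ c ≤ (a * x ^ α) ^ c :=
      Real.rpow_le_rpow_of_nonpos (by positivity) h1 hc.le
    have h3 : (a * x ^ α) ^ c = a ^ c * (x ^ α) ^ c :=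
      Real.mul_rpow ha.le hy0.le
    have h4 : 0 ≤ (1 + a) ^ c * (x ^ α) ^ c := by positivity
    rw [hxac]
    calc (1 + a * x ^ α) ^ c ≤ a ^ c * (x ^ α) ^ c := by rw [← h3]; exact h2
      _ ≤ (a ^ c + (1 + a) ^ c) * (x ^ α) ^ c := by nlinarith

/-- Constant bounding a list of terms. -/
noncomputable def cBound (a : ℝ) (L : List (ℝ × ℝ × ℝ)) : ℝ :=
  (L.map fun p => |p.1| * (a ^ p.2.2 + (1 + a) ^ p.2.2)).sum

lemma tval_bound {a α m x : ℝ} (ha : 0 < a) (hα : 0 ≤ α) (hx : 1 ≤ x)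
    (p : ℝ × ℝ × ℝ) (hp : p.2.1 + α * p.2.2 = m) :
    |tval a α p x| ≤ |p.1| * (a ^ p.2.2 + (1 + a) ^ p.2.2) * x ^ m := by
  obtain ⟨q, b, c⟩ := p
  have hx0 : 0 < x := lt_of_lt_of_le one_pos hx
  have hb : 0 < x ^ b := Real.rpow_pos_of_pos hx0 b
  have hpos : 0 < 1 + a * x ^ α := one_add_pos ha hx0
  have hc : 0 < (1 + a * x ^ α) ^ c := Real.rpow_pos_of_pos hpos c
  have habs : |tval a α (q, b, c) x| = |q| * x ^ b * (1 + a * x ^ α) ^ c := by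
    simp only [tval, abs_mul, abs_of_pos hb, abs_of_pos hc]
  rw [habs]
  have key : (1 + a * x ^ α) ^ c ≤ (a ^ c + (1 + a) ^ c) * x ^ (α * c) :=
    rpow_bound ha hα hx
  have hm : x ^ m = x ^ b * x ^ (α * c) := by
    rw [← Real.rpow_add hx0, hp]
  rw [hm]
  have hq : 0 ≤ |q| := abs_nonneg q
  have hxac : 0 < x ^ (α * c) := Real.rpow_pos_of_pos hx0 _
  calc |q| * x ^ b * (1 + a * x ^ α) ^ c
      ≤ |q| * x ^ b * ((a ^ c + (1 + a) ^ c) * x ^ (α * c)) := by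
        apply mul_le_mul_of_nonneg_left key (by positivity)
    _ = |q| * (a ^ c + (1 + a) ^ c) * (x ^ b * x ^ (α * c)) := by ring

lemma val_bound {a α m x : ℝ} (ha : 0 < a) (hα : 0 ≤ α) (hx : 1 ≤ x)
    (L : List (ℝ × ℝ × ℝ)) (hL : ∀ p ∈ L, p.2.1 + α * p.2.2 = m) :
    |val a α L x| ≤ cBound a L * x ^ m := by
  induction L with
  | nil => simp [val, cBound]
  | cons p L ih =>
    have h1 : |tval a α p x| ≤ |p.1| * (a ^ p.2.2 + (1 + a) ^ p.2.2) * x ^ m :=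
      tval_bound ha hα hx p (hL p List.mem_cons_self)
    have h2 : |val a α L x| ≤ cBound a L * x ^ m :=
      ih fun q hq => hL q (List.mem_cons_of_mem p hq)
    have h3 : cBound a (p :: L) = |p.1| * (a ^ p.2.2 + (1 + a) ^ p.2.2) + cBound a L := by
      simp [cBound]
    rw [val_cons, h3, add_mul]
    calc |tval a α p x + val a α L x| ≤ |tval a α p x| + |val a α L x| := abs_add_le _ _
      _ ≤ _ := add_le_add h1 h2

end SymbolGAux

open SymbolGAux in
/-- For `α ∈ [2,3)` (where `a_α = -cos(απ/2) > 0`) and every `k ∈ ℕ` there is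
`C_k > 0` such that for all `ξ ≥ 1` the `k`-th derivative of `ξ ↦ √(1 + a_α ξ^α)`
is bounded by `C_k ξ^{α/2-k}`: away from `ξ = 0` the symbol of `B_x^α` belongs to
the class `S^{α/2}`. -/
theorem symbol_g_estimates (α : ℝ) (hα : α ∈ Set.Ico (2 : ℝ) 3) (ha : 0 < aCoef α)
    (k : ℕ) :
    ∃ C : ℝ, 0 < C ∧ ∀ ξ : ℝ, 1 ≤ ξ →
      |iteratedDeriv k (fun x : ℝ => Real.sqrt (1 + aCoef α * x ^ α)) ξ| ≤
        C * ξ ^ (α / 2 - (k : ℝ)) := by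
  set a := aCoef α with ha_def
  have hα0 : (0 : ℝ) ≤ α := le_trans (by norm_num) hα.1
  set f : ℝ → ℝ := fun x : ℝ => Real.sqrt (1 + a * x ^ α) with hf
  -- representation of the k-th derivative as a sum of symbol terms on (0, ∞)
  have rep : ∀ k : ℕ, ∃ L : List (ℝ × ℝ × ℝ),
      (∀ p ∈ L, p.2.1 + α * p.2.2 = α / 2 - (k : ℝ)) ∧
      ∀ x : ℝ, 0 < x → iteratedDeriv k f x = val a α L x := by
    intro k
    induction k with
    | zero =>
      refine ⟨[(1, 0, 1 / 2)], ?_, ?_⟩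
      · intro p hp
        simp only [List.mem_singleton] at hp
        subst hp
        push_cast
        ring
      · intro x hx
        have hpos : 0 < 1 + a * x ^ α := one_add_pos ha hx
        simp [val, tval, hf, Real.rpow_zero, Real.sqrt_eq_rpow]
    | succ k ih =>
      obtain ⟨L, hord, heq⟩ := ih
      refine ⟨dL a α L, ?_, ?_⟩
      · intro p hp
        have := dL_order hord p hp
        rw [this]
        push_cast
        ring
      · intro x hx
        rw [iteratedDeriv_succ]
        have hev : iteratedDeriv k f =ᶠ[nhds x] fun y => val a α L y := by
          filter_upwards [isOpen_Ioi.mem_nhds (show x ∈ Set.Ioi (0:ℝ) from hx)] with y hy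
          exact heq y hy
        rw [hev.deriv_eq]
        exact (hasDerivAt_val ha hx L).deriv
  obtain ⟨L, hord, heq⟩ := rep k
  refine ⟨cBound a L + 1, ?_, ?_⟩
  · have : 0 ≤ cBound a L := by
      unfold cBound
      apply List.sum_nonneg
      intro y hy
      simp only [List.mem_map] at hy
      obtain ⟨p, _, rfl⟩ := hy
      have h1 : 0 < a ^ p.2.2 := Real.rpow_pos_of_pos ha _
      have h2 : 0 < (1 + a) ^ p.2.2 := Real.rpow_pos_of_pos (by linarith) _
      positivity
    linarith
  · intro ξ hξ
    have hξ0 : 0 < ξ := lt_of_lt_of_le one_pos hξ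
    rw [heq ξ hξ0]
    have hb := val_bound ha hα0 hξ L hord
    have hpow : 0 < ξ ^ (α / 2 - (k : ℝ)) := Real.rpow_pos_of_pos hξ0 _
    nlinarith [hb, hpow]
end
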